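/- There exist a complex number ξ ∈ ℂ such that 1, ξ and ξ² are linearly independent over ℚ(i), and a constant c > 0 such that, for every sufficiently large real number X, there is a nonzero triple (x₀, x₁, x₂) ∈ ℤ[i]³ of Gaussian integers with |x₀| ≤ X and max{|x₀ξ − x₁|, |x₀ξ² − x₂|} ≤ c·X^{−1/γ}. -/

import Mathlib

open Complex IntermediateField GaussianInt

/-- 2×2 integer matrices, presented concretely. -/
@[ext] structure RM2 where
  a : ℤ
  b : ℤ
  c : ℤ
  d : ℤ
  deriving DecidableEq

namespace RM2

def mul (X Y : RM2) : RM2 :=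
  ⟨X.a*Y.a + X.b*Y.c, X.a*Y.b + X.b*Y.d, X.c*Y.a + X.d*Y.c, X.c*Y.b + X.d*Y.d⟩

lemma mul_assoc (X Y Z : RM2) : mul (mul X Y) Z = mul X (mul Y Z) := by
  ext <;> simp [mul] <;> ring

def t (X : RM2) : RM2 := ⟨X.a, X.c, X.b, X.d⟩

lemma t_mul (X Y : RM2) : (mul X Y).t = mul Y.t X.t := by
  ext <;> simp [mul, t] <;> ring

end RM2

def TT : ℕ → RM2 := fun j => if j % 2 = 0 then ⟨3,1,2,1⟩ else ⟨3,2,1,1⟩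

lemma TT_add_two (j : ℕ) : TT (j+2) = TT j := by
  simp [TT, Nat.add_mod_right]

lemma TT_t (j : ℕ) : (TT j).t = TT (j+1) := by
  rcases Nat.even_or_odd j with h | h
  · have h1 : j % 2 = 0 := Nat.even_iff.mp h
    have h2 : (j+1) % 2 = 1 := by omega
    simp [TT, h1, h2, RM2.t]
  · have h1 : j % 2 = 1 := Nat.odd_iff.mp h
    have h2 : (j+1) % 2 = 0 := by omega
    simp [TT, h1, h2, RM2.t]

def ww : ℕ → RM2
  | 0 => ⟨1,1,1,0⟩
  | 1 => ⟨4,3,3,2⟩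
  | (j+2) => RM2.mul (RM2.mul (ww (j+1)) (TT j)) (ww j)

lemma ww_rec (j : ℕ) : ww (j+2) = RM2.mul (RM2.mul (ww (j+1)) (TT j)) (ww j) := rfl

/-- Key invariant: symmetry of two consecutive `ww` plus the commutation relation. -/
lemma ww_invariant (j : ℕ) :
    (ww j).t = ww j ∧ (ww (j+1)).t = ww (j+1) ∧
      RM2.mul (ww j) (RM2.mul (TT (j+1)) (ww (j+1)))
        = RM2.mul (ww (j+1)) (RM2.mul (TT j) (ww j)) := by
  induction j with
  | zero => refine ⟨by decide, by decide, by decide⟩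
  | succ j ih =>
    obtain ⟨h1, h2, hC⟩ := ih
    have hsym : (ww (j+2)).t = ww (j+2) := by
      rw [ww_rec, RM2.t_mul, RM2.t_mul, h1, h2, TT_t]
      rw [← RM2.mul_assoc] at hC ⊢
      rw [hC, RM2.mul_assoc]
    refine ⟨h2, hsym, ?_⟩
    rw [ww_rec, TT_add_two]
    simp only [RM2.mul_assoc]
    rw [hC]

lemma ww_symm (j : ℕ) : (ww j).c = (ww j).b := by
  have h := (ww_invariant j).1
  have := congrArg RM2.b h
  simpa [RM2.t] using this

def Qq (j : ℕ) : ℤ := (ww j).a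
def Pp (j : ℕ) : ℤ := (ww j).b
def Rr (j : ℕ) : ℤ := (ww j).d

lemma TT_entries (j : ℕ) : (TT j).a = 3 ∧ (TT j).d = 1 ∧ 1 ≤ (TT j).b ∧ (TT j).b ≤ 2
    ∧ 1 ≤ (TT j).c ∧ (TT j).c ≤ 2 := by
  unfold TT; split <;> norm_num

/-- scalar form of one induction step -/
lemma step_order {A B D a b d t2 t3 : ℤ}
    (hD : 0 ≤ D) (h1 : D ≤ B) (h2 : B ≤ A) (hd : 0 ≤ d) (hb : d ≤ b) (ha : b ≤ a)
    (ht2 : 1 ≤ t2) (ht2' : t2 ≤ 2) (ht3 : 1 ≤ t3) (ht3' : t3 ≤ 2) :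
    0 ≤ (3*B+D*t3)*b + (B*t2+D)*d
    ∧ (3*B+D*t3)*b + (B*t2+D)*d ≤ (3*B+D*t3)*a + (B*t2+D)*b
    ∧ (3*A+B*t3)*b + (A*t2+B)*d ≤ (3*A+B*t3)*a + (A*t2+B)*b
    ∧ 3*A*a ≤ (3*A+B*t3)*a + (A*t2+B)*b
    ∧ (3*A+B*t3)*a + (A*t2+B)*b ≤ 12*A*a := by
  have hB : 0 ≤ B := le_trans hD h1
  have hA : 0 ≤ A := le_trans hB h2
  have hb0 : 0 ≤ b := le_trans hd hb
  have ha0 : 0 ≤ a := le_trans hb0 ha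
  have ht2nn : (0:ℤ) ≤ t2 := by linarith
  have ht3nn : (0:ℤ) ≤ t3 := by linarith
  refine ⟨by positivity, ?_, ?_, ?_, ?_⟩
  · nlinarith [mul_nonneg hB (sub_nonneg.2 ha), mul_nonneg hD (sub_nonneg.2 ha),
      mul_nonneg hB (sub_nonneg.2 hb), mul_nonneg hD (sub_nonneg.2 hb),
      mul_nonneg (mul_nonneg hD ht3nn) ha0]
  · nlinarith [mul_nonneg hA (sub_nonneg.2 ha), mul_nonneg hB (sub_nonneg.2 ha),
      mul_nonneg hA (sub_nonneg.2 hb), mul_nonneg hB (sub_nonneg.2 hb)]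
  · nlinarith [mul_nonneg (mul_nonneg hB ht3nn) ha0, mul_nonneg hA (mul_nonneg ht2nn hb0),
      mul_nonneg hB hb0]
  · nlinarith [mul_nonneg (mul_nonneg (sub_nonneg.2 h2) (sub_nonneg.2 ht3')) ha0,
      mul_nonneg (mul_nonneg hB (sub_nonneg.2 ht3')) ha0,
      mul_nonneg hA (mul_nonneg (sub_nonneg.2 ht2') hb0),
      mul_nonneg hA (sub_nonneg.2 ha), mul_nonneg hB (sub_nonneg.2 ha),
      mul_nonneg (sub_nonneg.2 h2) hb0, mul_nonneg hA (sub_nonneg.2 hb)]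

lemma ww_expand (j : ℕ) :
    Qq (j+2) = (3*(Qq (j+1))+(Pp (j+1))*(TT j).c)*(Qq j) + ((Qq (j+1))*(TT j).b+(Pp (j+1)))*(Pp j)
    ∧ Pp (j+2) = (3*(Qq (j+1))+(Pp (j+1))*(TT j).c)*(Pp j) + ((Qq (j+1))*(TT j).b+(Pp (j+1)))*(Rr j)
    ∧ (ww (j+2)).c = (3*(Pp (j+1))+(Rr (j+1))*(TT j).c)*(Qq j) + ((Pp (j+1))*(TT j).b+(Rr (j+1)))*(Pp j)
    ∧ Rr (j+2) = (3*(Pp (j+1))+(Rr (j+1))*(TT j).c)*(Pp j) + ((Pp (j+1))*(TT j).b+(Rr (j+1)))*(Rr j) := by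
  obtain ⟨hta, htd, _, _, _, _⟩ := TT_entries j
  have hs0 := ww_symm j
  have hs1 := ww_symm (j+1)
  simp only [Qq, Pp, Rr, ww_rec, RM2.mul] at *
  rw [hta, htd, hs0, hs1]
  refine ⟨by ring, by ring, by ring, by ring⟩

lemma ww_ord_grow : ∀ j : ℕ,
    (0 ≤ Rr j ∧ Rr j ≤ Pp j ∧ Pp j ≤ Qq j)
    ∧ (0 ≤ Rr (j+1) ∧ Rr (j+1) ≤ Pp (j+1) ∧ Pp (j+1) ≤ Qq (j+1))
    ∧ 3*(Qq (j+1))*(Qq j) ≤ Qq (j+2) ∧ Qq (j+2) ≤ 12*(Qq (j+1))*(Qq j) := by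
  have main : ∀ j : ℕ, (0 ≤ Rr j ∧ Rr j ≤ Pp j ∧ Pp j ≤ Qq j)
      ∧ (0 ≤ Rr (j+1) ∧ Rr (j+1) ≤ Pp (j+1) ∧ Pp (j+1) ≤ Qq (j+1)) := by
    intro j
    induction j with
    | zero => norm_num [Qq, Pp, Rr, ww]
    | succ j ih =>
      obtain ⟨h0, h1⟩ := ih
      refine ⟨h1, ?_⟩
      obtain ⟨hD, hDB, hBA⟩ := h1
      obtain ⟨hd, hdb, hba⟩ := h0
      obtain ⟨hta, htd, htb1, htb2, htc1, htc2⟩ := TT_entries j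
      obtain ⟨e1, e2, e3, e4⟩ := ww_expand j
      have hsym2 := ww_symm (j+2)
      obtain ⟨s1, s2, s3, _, _⟩ := step_order hD hDB hBA hd hdb hba htb1 htb2 htc1 htc2
      refine ⟨by rw [e4]; exact s1, ?_, ?_⟩
      · have : Rr (j+2) ≤ (ww (j+2)).c := by rw [e4, e3]; exact s2
        rwa [hsym2] at this
      · rw [e2, e1]; exact s3
  intro j
  obtain ⟨hD, hDB, hBA⟩ := (main j).2
  obtain ⟨hd, hdb, hba⟩ := (main j).1
  obtain ⟨hta, htd, htb1, htb2, htc1, htc2⟩ := TT_entries j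
  obtain ⟨e1, _, _, _⟩ := ww_expand j
  obtain ⟨_, _, _, s4, s5⟩ := step_order hD hDB hBA hd hdb hba htb1 htb2 htc1 htc2
  exact ⟨main j |>.1, (main j).2, by rw [e1]; exact s4, by rw [e1]; exact s5⟩

lemma Rr_nonneg (j : ℕ) : 0 ≤ Rr j := (ww_ord_grow j).1.1
lemma Rr_le_Pp (j : ℕ) : Rr j ≤ Pp j := (ww_ord_grow j).1.2.1
lemma Pp_le_Qq (j : ℕ) : Pp j ≤ Qq j := (ww_ord_grow j).1.2.2
lemma Pp_nonneg (j : ℕ) : 0 ≤ Pp j := le_trans (Rr_nonneg j) (Rr_le_Pp j)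
lemma Qq_grow_lower (j : ℕ) : 3*(Qq (j+1))*(Qq j) ≤ Qq (j+2) := (ww_ord_grow j).2.2.1
lemma Qq_grow_upper (j : ℕ) : Qq (j+2) ≤ 12*(Qq (j+1))*(Qq j) := (ww_ord_grow j).2.2.2

lemma Qq_one_le : ∀ j, 1 ≤ Qq j := by
  have main : ∀ j, 1 ≤ Qq j ∧ 1 ≤ Qq (j+1) := by
    intro j
    induction j with
    | zero => norm_num [Qq, ww]
    | succ j ih =>
      refine ⟨ih.2, ?_⟩
      have := Qq_grow_lower j
      nlinarith [ih.1, ih.2]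
  exact fun j => (main j).1

lemma Qq_succ_ge (j : ℕ) : 3 * Qq j ≤ Qq (j+1) := by
  cases j with
  | zero => norm_num [Qq, ww]
  | succ j =>
    have := Qq_grow_lower j
    nlinarith [Qq_one_le j, Qq_one_le (j+1)]

lemma Qq_ge_pow (j : ℕ) : 3^j ≤ Qq j := by
  induction j with
  | zero => simpa using Qq_one_le 0
  | succ j ih =>
    calc (3:ℤ)^(j+1) = 3 * 3^j := by ring
    _ ≤ 3 * Qq j := by linarith
    _ ≤ Qq (j+1) := Qq_succ_ge j

def RM2.det (X : RM2) : ℤ := X.a * X.d - X.b * X.c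

lemma det_mul (X Y : RM2) : (RM2.mul X Y).det = X.det * Y.det := by
  simp [RM2.mul, RM2.det]; ring

lemma det_TT (j : ℕ) : (TT j).det = 1 := by
  unfold TT; split <;> norm_num [RM2.det]

lemma det_ww : ∀ j, ((ww j).det = 1 ∨ (ww j).det = -1)
    ∧ ((ww (j+1)).det = 1 ∨ (ww (j+1)).det = -1) := by
  intro j
  induction j with
  | zero => norm_num [RM2.det, ww]
  | succ j ih =>
    refine ⟨ih.2, ?_⟩
    have : (ww (j+2)).det = (ww (j+1)).det * (ww j).det := by
      rw [ww_rec, det_mul, det_mul, det_TT, mul_one]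
    rcases ih.1 with h1 | h1 <;> rcases ih.2 with h2 | h2 <;>
      rw [this, h1, h2] <;> norm_num

lemma c1_eq (j : ℕ) : Pp (j+1) * Qq (j+2) - Qq (j+1) * Pp (j+2)
    = ((Pp (j+1))^2 - Qq (j+1) * Rr (j+1)) * ((TT j).c * Qq j + Pp j) := by
  obtain ⟨e1, _, e3, _⟩ := ww_expand j
  have h2 : Pp (j+2) = (ww (j+2)).c := (ww_symm (j+2)).symm
  rw [h2, e3, e1]; ring

lemma det_eq (j : ℕ) : (ww j).det = Qq j * Rr j - (Pp j)^2 := by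
  have := ww_symm j
  simp only [RM2.det, Qq, Pp, Rr, this]; ring

lemma c1_abs (j : ℕ) : |Pp (j+1) * Qq (j+2) - Qq (j+1) * Pp (j+2)| ≤ 3 * Qq j := by
  rw [c1_eq j]
  have hdet : (Pp (j+1))^2 - Qq (j+1) * Rr (j+1) = -(ww (j+1)).det := by
    rw [det_eq]; ring
  have h1 : |(Pp (j+1))^2 - Qq (j+1) * Rr (j+1)| = 1 := by
    rw [hdet, abs_neg]
    rcases (det_ww (j+1)).1 with h | h <;> rw [h] <;> norm_num
  rw [abs_mul, h1, one_mul]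
  obtain ⟨_, _, _, _, htc1, htc2⟩ := TT_entries j
  have hQ := Qq_one_le j
  have hP0 := Pp_nonneg j
  have hPQ := Pp_le_Qq j
  have habs : |(TT j).c * Qq j + Pp j| = (TT j).c * Qq j + Pp j :=
    _root_.abs_of_nonneg (by nlinarith)
  rw [habs]
  nlinarith

noncomputable def xseq (j : ℕ) : ℝ := (Pp j : ℝ) / (Qq j : ℝ)

lemma QqR_pos (j : ℕ) : (0:ℝ) < (Qq j : ℝ) := by
  exact_mod_cast lt_of_lt_of_le one_pos (Qq_one_le j)

lemma xseq_diff (j : ℕ) : |xseq (j+1) - xseq j| ≤ 1 / (Qq j : ℝ)^2 := by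
  cases j with
  | zero =>
    have : xseq 1 - xseq 0 = -(1/4) := by
      norm_num [xseq, Qq, Pp, ww]
    rw [this, abs_neg, _root_.abs_of_nonneg (by norm_num : (0:ℝ) ≤ 1/4)]
    norm_num [Qq, ww]
  | succ i =>
    have hQ1 := QqR_pos (i+1)
    have hQ2 := QqR_pos (i+2)
    have hQ0 := QqR_pos i
    have key : xseq (i+2) - xseq (i+1)
        = -((Pp (i+1) * Qq (i+2) - Qq (i+1) * Pp (i+2) : ℤ) : ℝ) / ((Qq (i+1) : ℝ) * (Qq (i+2) : ℝ)) := by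
      unfold xseq
      field_simp [xseq]
      push_cast
      ring
    rw [key, abs_div, abs_neg]
    have h1 : |((Pp (i+1) * Qq (i+2) - Qq (i+1) * Pp (i+2) : ℤ) : ℝ)| ≤ 3 * (Qq i : ℝ) := by
      have := c1_abs i
      calc |((Pp (i+1) * Qq (i+2) - Qq (i+1) * Pp (i+2) : ℤ) : ℝ)|
          = ((|Pp (i+1) * Qq (i+2) - Qq (i+1) * Pp (i+2)| : ℤ) : ℝ) := by
            rw [Int.cast_abs]
        _ ≤ ((3 * Qq i : ℤ) : ℝ) := by exact_mod_cast this
        _ = 3 * (Qq i : ℝ) := by push_cast; ring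
    have habs : |(Qq (i+1) : ℝ) * (Qq (i+2) : ℝ)| = (Qq (i+1) : ℝ) * (Qq (i+2) : ℝ) :=
      abs_of_pos (by positivity)
    rw [habs]
    rw [div_le_div_iff₀ (by positivity) (by positivity)]
    have hlow : (3:ℝ) * (Qq (i+1) : ℝ) * (Qq i : ℝ) ≤ (Qq (i+2) : ℝ) := by
      exact_mod_cast Qq_grow_lower i
    calc |((Pp (i+1) * Qq (i+2) - Qq (i+1) * Pp (i+2) : ℤ) : ℝ)| * (Qq (i+1):ℝ)^2
        ≤ (3 * (Qq i : ℝ)) * (Qq (i+1):ℝ)^2 := by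
          apply mul_le_mul_of_nonneg_right h1 (by positivity)
      _ ≤ 1 * ((Qq (i+1) : ℝ) * (Qq (i+2) : ℝ)) := by
          nlinarith [mul_le_mul_of_nonneg_left hlow hQ1.le]

lemma xseq_tele : ∀ (k j : ℕ), |xseq (j+k) - xseq j| ≤ 2 / (Qq j : ℝ)^2 := by
  intro k
  induction k with
  | zero => intro j; simp; positivity
  | succ k ih =>
    intro j
    have h1 := ih (j+1)
    have h2 := xseq_diff j
    have hstep : (Qq (j+1) : ℝ)^2 ≥ 9 * (Qq j : ℝ)^2 := by
      have h3 : (3:ℝ) * (Qq j : ℝ) ≤ (Qq (j+1) : ℝ) := by exact_mod_cast Qq_succ_ge j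
      nlinarith [QqR_pos j, QqR_pos (j+1)]
    have hQ0 := QqR_pos j
    have hQ1 := QqR_pos (j+1)
    have e : j + (k+1) = (j+1) + k := by omega
    rw [e]
    have h4 : 2 / (Qq (j+1):ℝ)^2 ≤ 2 / (9 * (Qq j : ℝ)^2) := by
      apply div_le_div_of_nonneg_left (by norm_num) (by positivity) hstep
    calc |xseq ((j+1)+k) - xseq j|
        ≤ |xseq ((j+1)+k) - xseq (j+1)| + |xseq (j+1) - xseq j| := abs_sub_le _ _ _
      _ ≤ 2 / (Qq (j+1):ℝ)^2 + 1 / (Qq j:ℝ)^2 := add_le_add h1 h2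
      _ ≤ 2 / (9 * (Qq j : ℝ)^2) + 1 / (Qq j:ℝ)^2 := by linarith
      _ ≤ 2 / (Qq j : ℝ)^2 := by
          rw [div_add_div _ _ (by positivity) (by positivity), div_le_div_iff₀ (by positivity) (by positivity)]
          ring_nf
          nlinarith [sq_nonneg ((Qq j : ℝ))]

lemma exists_xi : ∃ ξ : ℝ, (∀ j, |ξ - xseq j| ≤ 2 / (Qq j : ℝ)^2) ∧ 0 ≤ ξ ∧ ξ ≤ 1 := by
  have hcauchy : CauchySeq xseq := by
    apply cauchySeq_of_le_tendsto_0 (fun N => 4 / (Qq N : ℝ)^2)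
    · intro n m N hn hm
      obtain ⟨k1, rfl⟩ := Nat.exists_eq_add_of_le hn
      obtain ⟨k2, rfl⟩ := Nat.exists_eq_add_of_le hm
      rw [Real.dist_eq]
      calc |xseq (N + k1) - xseq (N + k2)|
          ≤ |xseq (N + k1) - xseq N| + |xseq N - xseq (N + k2)| := abs_sub_le _ _ _
        _ = |xseq (N + k1) - xseq N| + |xseq (N + k2) - xseq N| := by rw [abs_sub_comm (xseq N)]
        _ ≤ 2 / (Qq N : ℝ)^2 + 2 / (Qq N : ℝ)^2 := add_le_add (xseq_tele k1 N) (xseq_tele k2 N)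
        _ = 4 / (Qq N : ℝ)^2 := by ring
    · apply squeeze_zero (fun N => by positivity) (g := fun N => 4 * (1/9 : ℝ)^N)
      · intro N
        have h9 : (9:ℝ)^N ≤ ((Qq N : ℝ))^2 := by
          have := Qq_ge_pow N
          have h3 : (3:ℝ)^N ≤ (Qq N : ℝ) := by exact_mod_cast this
          have h3p : (0:ℝ) ≤ (3:ℝ)^N := by positivity
          calc (9:ℝ)^N = ((3:ℝ)^2)^N := by norm_num
            _ = ((3:ℝ)^N)^2 := by rw [← pow_mul, ← pow_mul, Nat.mul_comm]
            _ ≤ (Qq N : ℝ)^2 := by nlinarith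
        rw [div_le_iff₀ (pow_pos (QqR_pos N) 2)]
        calc (4:ℝ) = 4 * (1/9:ℝ)^N * (9:ℝ)^N := by
              rw [mul_assoc, ← mul_pow]; norm_num
          _ ≤ 4 * (1/9:ℝ)^N * (Qq N : ℝ)^2 := by
              apply mul_le_mul_of_nonneg_left h9 (by positivity)
      · have := tendsto_pow_atTop_nhds_zero_of_lt_one (r := (1/9:ℝ)) (by norm_num) (by norm_num)
        simpa using this.const_mul 4
  obtain ⟨ξ, hξ⟩ := cauchySeq_tendsto_of_complete hcauchy
  have herr : ∀ j, |ξ - xseq j| ≤ 2 / (Qq j : ℝ)^2 := by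
    intro j
    have hconv : Filter.Tendsto (fun m => |xseq m - xseq j|) Filter.atTop (nhds |ξ - xseq j|) := by
      exact ((hξ.sub_const (xseq j)).abs)
    apply le_of_tendsto hconv
    filter_upwards [Filter.eventually_ge_atTop j] with m hm
    obtain ⟨k, rfl⟩ := Nat.exists_eq_add_of_le hm
    exact xseq_tele k j
  have hx01 : ∀ j, 0 ≤ xseq j ∧ xseq j ≤ 1 := by
    intro j
    constructor
    · show (0:ℝ) ≤ (Pp j : ℝ) / (Qq j : ℝ)
      apply div_nonneg _ (QqR_pos j).le
      exact_mod_cast Pp_nonneg j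
    · show (Pp j : ℝ) / (Qq j : ℝ) ≤ 1
      rw [div_le_one (QqR_pos j)]
      exact_mod_cast Pp_le_Qq j
  refine ⟨ξ, herr, ?_, ?_⟩
  · exact ge_of_tendsto hξ (Filter.Eventually.of_forall fun j => (hx01 j).1)
  · exact le_of_tendsto hξ (Filter.Eventually.of_forall fun j => (hx01 j).2)

section XiBounds

variable {ξ : ℝ} (herr : ∀ j, |ξ - xseq j| ≤ 2 / (Qq j : ℝ)^2) (h0 : 0 ≤ ξ) (h1 : ξ ≤ 1)

include herr in
lemma err1 (j : ℕ) : |(Qq j : ℝ) * ξ - (Pp j : ℝ)| ≤ 2 / (Qq j : ℝ) := by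
  have hQ := QqR_pos j
  have key : (Qq j : ℝ) * ξ - (Pp j : ℝ) = (Qq j : ℝ) * (ξ - xseq j) := by
    unfold xseq
    field_simp [xseq]
  rw [key, abs_mul, abs_of_pos hQ]
  calc (Qq j : ℝ) * |ξ - xseq j| ≤ (Qq j : ℝ) * (2 / (Qq j : ℝ)^2) :=
        mul_le_mul_of_nonneg_left (herr j) hQ.le
    _ = 2 / (Qq j : ℝ) := by field_simp

include herr h0 h1 in
lemma err2 (j : ℕ) : |(Qq j : ℝ) * ξ^2 - (Rr j : ℝ)| ≤ 5 / (Qq j : ℝ) := by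
  have hQ := QqR_pos j
  have hdetabs : |(Pp j : ℝ)^2 - (Qq j : ℝ) * (Rr j : ℝ)| = 1 := by
    have hdet : (Pp j)^2 - Qq j * Rr j = -(ww j).det := by rw [det_eq]; ring
    have : |(Pp j)^2 - Qq j * Rr j| = 1 := by
      rw [hdet, abs_neg]
      rcases (det_ww j).1 with h | h <;> rw [h] <;> norm_num
    calc |(Pp j : ℝ)^2 - (Qq j : ℝ) * (Rr j : ℝ)|
        = ((|((Pp j)^2 - Qq j * Rr j : ℤ)| : ℤ) : ℝ) := by rw [Int.cast_abs]; push_cast; ring_nf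
      _ = 1 := by rw [this]; norm_num
  have hPR : |(Pp j : ℝ) * ξ - (Rr j : ℝ)| ≤ 3 / (Qq j : ℝ) := by
    have key : (Pp j : ℝ) * ξ - (Rr j : ℝ)
        = (Pp j : ℝ) * (ξ - xseq j) + ((Pp j : ℝ)^2 - (Qq j:ℝ) * (Rr j : ℝ)) / (Qq j : ℝ) := by
      unfold xseq
      field_simp [xseq]
      ring
    have hP0 : (0:ℝ) ≤ (Pp j : ℝ) := by exact_mod_cast Pp_nonneg j
    have hPQ : (Pp j : ℝ) ≤ (Qq j : ℝ) := by exact_mod_cast Pp_le_Qq j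
    rw [key]
    calc |(Pp j : ℝ) * (ξ - xseq j) + ((Pp j : ℝ)^2 - (Qq j:ℝ) * (Rr j : ℝ)) / (Qq j : ℝ)|
        ≤ |(Pp j : ℝ) * (ξ - xseq j)| + |((Pp j : ℝ)^2 - (Qq j:ℝ) * (Rr j : ℝ)) / (Qq j : ℝ)| :=
          abs_add_le _ _
      _ = (Pp j : ℝ) * |ξ - xseq j| + |(Pp j : ℝ)^2 - (Qq j:ℝ) * (Rr j : ℝ)| / (Qq j : ℝ) := by
          rw [abs_mul, _root_.abs_of_nonneg hP0, abs_div, _root_.abs_of_pos hQ]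
      _ ≤ (Qq j : ℝ) * (2 / (Qq j : ℝ)^2) + 1 / (Qq j : ℝ) := by
          rw [hdetabs]
          have := herr j
          have h2 : (Pp j : ℝ) * |ξ - xseq j| ≤ (Qq j : ℝ) * (2 / (Qq j : ℝ)^2) :=
            mul_le_mul hPQ (herr j) (abs_nonneg _) hQ.le
          linarith
      _ = 3 / (Qq j : ℝ) := by field_simp; ring
  have key2 : (Qq j : ℝ) * ξ^2 - (Rr j : ℝ)
      = ξ * ((Qq j : ℝ) * ξ - (Pp j : ℝ)) + ((Pp j : ℝ) * ξ - (Rr j : ℝ)) := by ring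
  rw [key2]
  calc |ξ * ((Qq j : ℝ) * ξ - (Pp j : ℝ)) + ((Pp j : ℝ) * ξ - (Rr j : ℝ))|
      ≤ |ξ| * |(Qq j : ℝ) * ξ - (Pp j : ℝ)| + |(Pp j : ℝ) * ξ - (Rr j : ℝ)| := by
        rw [← abs_mul]; exact abs_add_le _ _
    _ ≤ 1 * (2 / (Qq j : ℝ)) + 3 / (Qq j : ℝ) := by
        have hxi : |ξ| ≤ 1 := by rw [_root_.abs_of_nonneg h0]; exact h1
        have := err1 herr j
        have hnn : (0:ℝ) ≤ 2 / (Qq j : ℝ) := by positivity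
        have := mul_le_mul hxi (err1 herr j) (abs_nonneg _) (by norm_num)
        linarith
    _ = 5 / (Qq j : ℝ) := by field_simp; ring

end XiBounds

section Gold

local notation "γ" => Real.goldenRatio

lemma gold_inv_eq : γ⁻¹ = γ - 1 := by
  have h := Real.goldenRatio_sq
  have key : (γ - 1) * γ = 1 := by nlinarith
  exact (eq_inv_of_mul_eq_one_left key).symm

lemma gold_one_add_inv : 1 + γ⁻¹ = γ := by rw [gold_inv_eq]; ring

lemma gold_sq_ge_two : 2 ≤ γ^2 := by
  rw [Real.goldenRatio_sq]
  linarith [Real.one_lt_goldenRatio]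

lemma rpow_144_sub : (144:ℝ) ^ (γ⁻¹ * γ⁻¹) ≤ 12 := by
  have h1 : γ⁻¹ * γ⁻¹ = (γ^2)⁻¹ := by rw [← mul_inv, ← sq]
  have h2 : (γ^2)⁻¹ ≤ (2:ℝ)⁻¹ := by
    apply inv_anti₀ (by norm_num) gold_sq_ge_two
  have h3 : (144:ℝ) ^ (γ⁻¹ * γ⁻¹) ≤ (144:ℝ) ^ ((2:ℝ)⁻¹) := by
    rw [h1]
    exact Real.rpow_le_rpow_of_exponent_le (by norm_num) h2
  have h4 : (144:ℝ) ^ ((2:ℝ)⁻¹) = 12 := by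
    rw [show (144:ℝ) = 12^(2:ℕ) by norm_num, ← Real.rpow_natCast 12 2,
      ← Real.rpow_mul (by norm_num)]
    norm_num
  linarith

lemma uR_one_le (j : ℕ) : (1:ℝ) ≤ (Qq j : ℝ) := by exact_mod_cast Qq_one_le j

lemma gold_chain : ∀ j : ℕ, (Qq (j+1) : ℝ) ≤ 144 * (Qq j : ℝ) ^ γ
    ∧ (144:ℝ) ^ (-γ⁻¹) * (Qq j : ℝ) ^ γ ≤ (Qq (j+1) : ℝ) := by
  intro j
  induction j with
  | zero =>
    constructor
    · have : (Qq 0 : ℝ) = 1 := by norm_num [Qq, ww]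
      rw [this, Real.one_rpow]
      have : (Qq 1 : ℝ) = 4 := by norm_num [Qq, ww]
      rw [this]; norm_num
    · have h0 : (Qq 0 : ℝ) = 1 := by norm_num [Qq, ww]
      have h1 : (Qq 1 : ℝ) = 4 := by norm_num [Qq, ww]
      rw [h0, h1, Real.one_rpow, mul_one]
      have : (144:ℝ) ^ (-γ⁻¹) ≤ 1 :=
        Real.rpow_le_one_of_one_le_of_nonpos (by norm_num)
          (neg_nonpos.2 (inv_nonneg.2 Real.goldenRatio_pos.le))
      linarith
  | succ j ih =>
    obtain ⟨ihU, ihL⟩ := ih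
    have hu0 : (0:ℝ) < (Qq j : ℝ) := QqR_pos j
    have hu1 : (0:ℝ) < (Qq (j+1) : ℝ) := QqR_pos (j+1)
    have hγ0 : (0:ℝ) < γ := Real.goldenRatio_pos
    have hγi : (0:ℝ) ≤ γ⁻¹ := inv_nonneg.2 hγ0.le
    have hgrowU : (Qq (j+2) : ℝ) ≤ 12 * (Qq (j+1) : ℝ) * (Qq j : ℝ) := by
      exact_mod_cast Qq_grow_upper j
    have hgrowL : 3 * (Qq (j+1) : ℝ) * (Qq j : ℝ) ≤ (Qq (j+2) : ℝ) := by
      exact_mod_cast Qq_grow_lower j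
    have hsplit : (Qq (j+1) : ℝ) ^ γ = (Qq (j+1) : ℝ) * (Qq (j+1) : ℝ) ^ γ⁻¹ := by
      conv_lhs => rw [← gold_one_add_inv]
      rw [Real.rpow_add hu1, Real.rpow_one]
    constructor
    · -- upper bound
      have hbound : (Qq j : ℝ) ≤ (144:ℝ) ^ (γ⁻¹ * γ⁻¹) * (Qq (j+1) : ℝ) ^ γ⁻¹ := by
        have h1 : (Qq j : ℝ) ^ γ ≤ (144:ℝ) ^ (γ⁻¹) * (Qq (j+1) : ℝ) := by
          calc (Qq j : ℝ) ^ γ = (144:ℝ) ^ (γ⁻¹) * ((144:ℝ) ^ (-γ⁻¹) * (Qq j : ℝ) ^ γ) := by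
                rw [← mul_assoc, ← Real.rpow_add (by norm_num : (0:ℝ) < 144)]
                simp
            _ ≤ (144:ℝ) ^ (γ⁻¹) * (Qq (j+1) : ℝ) := by
                apply mul_le_mul_of_nonneg_left ihL (Real.rpow_nonneg (by norm_num) _)
        calc (Qq j : ℝ) = ((Qq j : ℝ) ^ γ) ^ γ⁻¹ := by
              rw [← Real.rpow_mul hu0.le, mul_inv_cancel₀ (ne_of_gt hγ0), Real.rpow_one]
          _ ≤ ((144:ℝ) ^ (γ⁻¹) * (Qq (j+1) : ℝ)) ^ γ⁻¹ := by
              apply Real.rpow_le_rpow (Real.rpow_nonneg hu0.le _) h1 hγi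
          _ = (144:ℝ) ^ (γ⁻¹ * γ⁻¹) * (Qq (j+1) : ℝ) ^ γ⁻¹ := by
              rw [Real.mul_rpow (Real.rpow_nonneg (by norm_num) _) hu1.le,
                ← Real.rpow_mul (by norm_num)]
      calc (Qq (j+2) : ℝ) ≤ 12 * (Qq (j+1) : ℝ) * (Qq j : ℝ) := hgrowU
        _ ≤ 12 * (Qq (j+1) : ℝ) * ((144:ℝ) ^ (γ⁻¹ * γ⁻¹) * (Qq (j+1) : ℝ) ^ γ⁻¹) := by
            apply mul_le_mul_of_nonneg_left hbound (by positivity)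
        _ ≤ 12 * (Qq (j+1) : ℝ) * (12 * (Qq (j+1) : ℝ) ^ γ⁻¹) := by
            apply mul_le_mul_of_nonneg_left _ (by positivity)
            apply mul_le_mul_of_nonneg_right rpow_144_sub (Real.rpow_nonneg hu1.le _)
        _ = 144 * (Qq (j+1) : ℝ) ^ γ := by rw [hsplit]; ring
    · -- lower bound
      have hbound : ((Qq (j+1) : ℝ) / 144) ^ γ⁻¹ ≤ (Qq j : ℝ) := by
        have h1 : (Qq (j+1) : ℝ) / 144 ≤ (Qq j : ℝ) ^ γ := by
          rw [div_le_iff₀ (by norm_num)]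
          linarith [ihU]
        calc ((Qq (j+1) : ℝ) / 144) ^ γ⁻¹ ≤ ((Qq j : ℝ) ^ γ) ^ γ⁻¹ :=
              Real.rpow_le_rpow (by positivity) h1 hγi
          _ = (Qq j : ℝ) := by
              rw [← Real.rpow_mul hu0.le, mul_inv_cancel₀ (ne_of_gt hγ0), Real.rpow_one]
      calc (144:ℝ) ^ (-γ⁻¹) * (Qq (j+1) : ℝ) ^ γ
          = (Qq (j+1) : ℝ) * (((Qq (j+1) : ℝ)) ^ γ⁻¹ * (144:ℝ) ^ (-γ⁻¹)) := by
            rw [hsplit]; ring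
        _ = (Qq (j+1) : ℝ) * ((Qq (j+1) : ℝ) / 144) ^ γ⁻¹ := by
            rw [Real.div_rpow hu1.le (by norm_num), Real.rpow_neg (by norm_num), div_eq_mul_inv]
        _ ≤ (Qq (j+1) : ℝ) * (Qq j : ℝ) := mul_le_mul_of_nonneg_left hbound hu1.le
        _ ≤ (Qq (j+2) : ℝ) := by nlinarith [hgrowL, hu0, hu1]

lemma exists_index (X : ℝ) (hX : 1 ≤ X) : ∃ j, (Qq j : ℝ) ≤ X ∧ X < (Qq (j+1) : ℝ) := by
  classical
  have hex : ∃ n : ℕ, X < (Qq n : ℝ) := by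
    obtain ⟨n, hn⟩ := pow_unbounded_of_one_lt X (by norm_num : (1:ℝ) < 3)
    refine ⟨n, lt_of_lt_of_le hn ?_⟩
    exact_mod_cast Qq_ge_pow n
  have hN : X < (Qq (Nat.find hex) : ℝ) := Nat.find_spec hex
  have hN0 : Nat.find hex ≠ 0 := by
    intro h
    have h0 : (Qq 0 : ℝ) = 1 := by norm_num [Qq, ww]
    rw [h, h0] at hN
    linarith
  obtain ⟨j, hj⟩ := Nat.exists_eq_succ_of_ne_zero hN0
  refine ⟨j, ?_, ?_⟩
  · by_contra hc
    have hlt : j < Nat.find hex := by omega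
    exact (Nat.find_min hex hlt) (lt_of_not_ge hc)
  · rw [show j + 1 = Nat.find hex by omega]
    exact hN

lemma rate (j : ℕ) (X : ℝ) (hX1 : 1 ≤ X) (hXQ : X < (Qq (j+1) : ℝ)) :
    5 / (Qq j : ℝ) ≤ 720 * X ^ (-1 / γ) := by
  have hX0 : (0:ℝ) < X := lt_of_lt_of_le one_pos hX1
  have hu0 : (0:ℝ) < (Qq j : ℝ) := QqR_pos j
  have hγ0 : (0:ℝ) < γ := Real.goldenRatio_pos
  have hγi : (0:ℝ) ≤ γ⁻¹ := inv_nonneg.2 hγ0.le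
  have hup : X ^ (γ⁻¹) ≤ 144 * (Qq j : ℝ) := by
    have h1 : X ≤ 144 * (Qq j : ℝ) ^ γ := le_trans hXQ.le (gold_chain j).1
    calc X ^ (γ⁻¹) ≤ (144 * (Qq j : ℝ) ^ γ) ^ γ⁻¹ := Real.rpow_le_rpow hX0.le h1 hγi
      _ = (144:ℝ) ^ γ⁻¹ * (Qq j : ℝ) := by
          rw [Real.mul_rpow (by norm_num) (Real.rpow_nonneg hu0.le _),
            ← Real.rpow_mul hu0.le, mul_inv_cancel₀ (ne_of_gt hγ0), Real.rpow_one]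
      _ ≤ 144 * (Qq j : ℝ) := by
          apply mul_le_mul_of_nonneg_right _ hu0.le
          calc (144:ℝ) ^ γ⁻¹ ≤ (144:ℝ) ^ (1:ℝ) := by
                apply Real.rpow_le_rpow_of_exponent_le (by norm_num)
                rw [gold_inv_eq]
                linarith [Real.goldenRatio_lt_two]
            _ = 144 := Real.rpow_one _
  have hXp : (0:ℝ) < X ^ (γ⁻¹) := Real.rpow_pos_of_pos hX0 _
  have key : X ^ (-1 / γ) = (X ^ (γ⁻¹))⁻¹ := by
    rw [neg_div, Real.rpow_neg hX0.le, one_div]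
  rw [key]
  have h2 : (144 * (Qq j:ℝ))⁻¹ ≤ (X ^ γ⁻¹)⁻¹ := inv_anti₀ hXp hup
  calc 5 / (Qq j : ℝ) = 720 * (144 * (Qq j:ℝ))⁻¹ := by
        field_simp
        ring
    _ ≤ 720 * (X ^ γ⁻¹)⁻¹ := mul_le_mul_of_nonneg_left h2 (by norm_num)

end Gold

/-! ### Mod 2 structure -/

def RM2.zm (X : RM2) : ZMod 2 × ZMod 2 × ZMod 2 × ZMod 2 :=
  ((X.a : ZMod 2), (X.b : ZMod 2), (X.c : ZMod 2), (X.d : ZMod 2))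

def mul2 (x y : ZMod 2 × ZMod 2 × ZMod 2 × ZMod 2) : ZMod 2 × ZMod 2 × ZMod 2 × ZMod 2 :=
  (x.1*y.1 + x.2.1*y.2.2.1, x.1*y.2.1 + x.2.1*y.2.2.2,
   x.2.2.1*y.1 + x.2.2.2*y.2.2.1, x.2.2.1*y.2.1 + x.2.2.2*y.2.2.2)

lemma zm_mul (X Y : RM2) : (RM2.mul X Y).zm = mul2 X.zm Y.zm := by
  simp [RM2.mul, RM2.zm, mul2]

lemma wmv0 : (ww 0).zm = (1,1,1,0) := by decide
lemma wmv1 : (ww 1).zm = (0,1,1,0) := by decide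
lemma wmv2 : (ww 2).zm = (1,0,0,1) := by decide
lemma wmv3 : (ww 3).zm = (0,1,1,1) := by decide
lemma wmv4 : (ww 4).zm = (0,1,1,0) := by decide
lemma wmv5 : (ww 5).zm = (1,0,0,1) := by decide
lemma wmv6 : (ww 6).zm = (1,1,1,0) := by decide
lemma wmv7 : (ww 7).zm = (0,1,1,0) := by decide

lemma TT_add_six (j : ℕ) : TT (j+6) = TT j := by
  rw [show j+6 = j+2+2+2 by omega, TT_add_two, TT_add_two, TT_add_two]

lemma wm_per : ∀ j, (ww (j+6)).zm = (ww j).zm ∧ (ww (j+7)).zm = (ww (j+1)).zm := by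
  intro j
  induction j with
  | zero => exact ⟨by rw [wmv6, wmv0], by rw [wmv7, wmv1]⟩
  | succ j ih =>
    obtain ⟨i6, i7⟩ := ih
    refine ⟨i7, ?_⟩
    have e1 : ww (j+1+7) = RM2.mul (RM2.mul (ww (j+7)) (TT (j+6))) (ww (j+6)) := ww_rec (j+6)
    have e2 : ww (j+2) = RM2.mul (RM2.mul (ww (j+1)) (TT j)) (ww j) := ww_rec j
    rw [show j+1+1 = j+2 by omega, e1, e2, zm_mul, zm_mul, zm_mul, zm_mul, i6, i7, TT_add_six]

lemma wm_perAll : ∀ (m j : ℕ), (ww (6*m + j)).zm = (ww j).zm := by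
  intro m
  induction m with
  | zero => intro j; norm_num
  | succ m ih =>
    intro j
    rw [show 6*(m+1) + j = (6*m + j) + 6 by omega, (wm_per (6*m+j)).1, ih]

/-- The determinant of three consecutive triples, in the `det_fin_three` expansion order. -/
def dd (j : ℕ) : ℤ :=
  Qq j * (Pp (j+1) * Rr (j+2)) - Qq j * (Rr (j+1) * Pp (j+2)) - Pp j * (Qq (j+1) * Rr (j+2))
  + Pp j * (Rr (j+1) * Qq (j+2)) + Rr j * (Qq (j+1) * Pp (j+2)) - Rr j * (Pp (j+1) * Qq (j+2))

lemma zm_parts {X : RM2} {v1 v2 v3 v4 : ZMod 2} (h : X.zm = (v1,v2,v3,v4)) :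
    ((X.a : ZMod 2) = v1) ∧ ((X.b : ZMod 2) = v2) ∧ ((X.c : ZMod 2) = v3) ∧ ((X.d : ZMod 2) = v4) := by
  simpa [RM2.zm, Prod.ext_iff] using h

lemma dd_ne_zero (j : ℕ) : dd j ≠ 0 := by
  intro h
  have hcast : ((dd j : ℤ) : ZMod 2) = 0 := by rw [h]; norm_num
  have key : ((dd j : ℤ) : ZMod 2) = 1 := by
    have e0 : (ww j).zm = (ww (j % 6)).zm := by
      conv_lhs => rw [← Nat.div_add_mod j 6]
      exact wm_perAll (j/6) (j % 6)
    have e1 : (ww (j+1)).zm = (ww (j % 6 + 1)).zm := by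
      rw [show j+1 = 6*(j/6) + (j % 6 + 1) by omega]
      exact wm_perAll (j/6) (j % 6 + 1)
    have e2 : (ww (j+2)).zm = (ww (j % 6 + 2)).zm := by
      rw [show j+2 = 6*(j/6) + (j % 6 + 2) by omega]
      exact wm_perAll (j/6) (j % 6 + 2)
    have hr : j % 6 < 6 := Nat.mod_lt _ (by norm_num)
    unfold dd
    push_cast
    simp only [Qq, Pp, Rr]
    set r := j % 6 with hrdef
    interval_cases r
    · obtain ⟨a0, b0, c0, d0⟩ := zm_parts (e0.trans wmv0)
      obtain ⟨a1, b1, c1, d1⟩ := zm_parts (e1.trans wmv1)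
      obtain ⟨a2, b2, c2, d2⟩ := zm_parts (e2.trans wmv2)
      rw [a0, b0, d0, a1, b1, d1, a2, b2, d2]
      decide
    · obtain ⟨a0, b0, c0, d0⟩ := zm_parts (e0.trans wmv1)
      obtain ⟨a1, b1, c1, d1⟩ := zm_parts (e1.trans wmv2)
      obtain ⟨a2, b2, c2, d2⟩ := zm_parts (e2.trans wmv3)
      rw [a0, b0, d0, a1, b1, d1, a2, b2, d2]
      decide
    · obtain ⟨a0, b0, c0, d0⟩ := zm_parts (e0.trans wmv2)
      obtain ⟨a1, b1, c1, d1⟩ := zm_parts (e1.trans wmv3)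
      obtain ⟨a2, b2, c2, d2⟩ := zm_parts (e2.trans wmv4)
      rw [a0, b0, d0, a1, b1, d1, a2, b2, d2]
      decide
    · obtain ⟨a0, b0, c0, d0⟩ := zm_parts (e0.trans wmv3)
      obtain ⟨a1, b1, c1, d1⟩ := zm_parts (e1.trans wmv4)
      obtain ⟨a2, b2, c2, d2⟩ := zm_parts (e2.trans wmv5)
      rw [a0, b0, d0, a1, b1, d1, a2, b2, d2]
      decide
    · obtain ⟨a0, b0, c0, d0⟩ := zm_parts (e0.trans wmv4)
      obtain ⟨a1, b1, c1, d1⟩ := zm_parts (e1.trans wmv5)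
      obtain ⟨a2, b2, c2, d2⟩ := zm_parts (e2.trans wmv6)
      rw [a0, b0, d0, a1, b1, d1, a2, b2, d2]
      decide
    · obtain ⟨a0, b0, c0, d0⟩ := zm_parts (e0.trans wmv5)
      obtain ⟨a1, b1, c1, d1⟩ := zm_parts (e1.trans wmv6)
      obtain ⟨a2, b2, c2, d2⟩ := zm_parts (e2.trans wmv7)
      rw [a0, b0, d0, a1, b1, d1, a2, b2, d2]
      decide
  rw [hcast] at key
  exact absurd key.symm one_ne_zero

section Nondeg

variable {ξ : ℝ} (herr : ∀ j, |ξ - xseq j| ≤ 2 / (Qq j : ℝ)^2) (h0 : 0 ≤ ξ) (h1 : ξ ≤ 1)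

include herr h0 h1 in
lemma int_nondeg (a b c : ℤ) (hrel : (a:ℝ) + (b:ℝ)*ξ + (c:ℝ)*ξ^2 = 0) :
    a = 0 ∧ b = 0 ∧ c = 0 := by
  have hE : ∀ j : ℕ, (2*|(b:ℝ)| + 5*|(c:ℝ)| : ℝ) < (Qq j : ℝ) →
      a * Qq j + b * Pp j + c * Rr j = 0 := by
    intro j hQ
    have hQp := QqR_pos j
    have key : ((a * Qq j + b * Pp j + c * Rr j : ℤ) : ℝ)
        = -((b:ℝ) * ((Qq j:ℝ)*ξ - (Pp j:ℝ)) + (c:ℝ) * ((Qq j:ℝ)*ξ^2 - (Rr j:ℝ))) := by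
      push_cast
      linear_combination (Qq j : ℝ) * hrel
    have habs : |((a * Qq j + b * Pp j + c * Rr j : ℤ) : ℝ)| < 1 := by
      rw [key, abs_neg]
      have e1 := err1 herr j
      have e2 := err2 herr h0 h1 j
      calc |(b:ℝ) * ((Qq j:ℝ)*ξ - (Pp j:ℝ)) + (c:ℝ) * ((Qq j:ℝ)*ξ^2 - (Rr j:ℝ))|
          ≤ |(b:ℝ)| * |(Qq j:ℝ)*ξ - (Pp j:ℝ)| + |(c:ℝ)| * |(Qq j:ℝ)*ξ^2 - (Rr j:ℝ)| := by
            calc _ ≤ |(b:ℝ) * ((Qq j:ℝ)*ξ - (Pp j:ℝ))| + |(c:ℝ) * ((Qq j:ℝ)*ξ^2 - (Rr j:ℝ))| :=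
                abs_add_le _ _
              _ = _ := by rw [abs_mul, abs_mul]
        _ ≤ |(b:ℝ)| * (2 / (Qq j : ℝ)) + |(c:ℝ)| * (5 / (Qq j : ℝ)) := by
            have := mul_le_mul_of_nonneg_left e1 (abs_nonneg (b:ℝ))
            have := mul_le_mul_of_nonneg_left e2 (abs_nonneg (c:ℝ))
            linarith
        _ = (2*|(b:ℝ)| + 5*|(c:ℝ)|) / (Qq j : ℝ) := by field_simp
        _ < 1 := by rw [div_lt_one hQp]; exact hQ
    have : |a * Qq j + b * Pp j + c * Rr j| < 1 := by exact_mod_cast habs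
    exact Int.abs_lt_one_iff.mp this
  obtain ⟨N, hN⟩ := pow_unbounded_of_one_lt (2*|(b:ℝ)| + 5*|(c:ℝ)| : ℝ) (by norm_num : (1:ℝ) < 3)
  have hbig : ∀ i, N ≤ i → (2*|(b:ℝ)| + 5*|(c:ℝ)| : ℝ) < (Qq i : ℝ) := by
    intro i hi
    calc (2*|(b:ℝ)| + 5*|(c:ℝ)| : ℝ) < 3^N := hN
      _ ≤ 3^i := by apply pow_le_pow_right₀ (by norm_num) hi
      _ ≤ (Qq i : ℝ) := by exact_mod_cast Qq_ge_pow i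
  have E0 := hE N (hbig N le_rfl)
  have E1 := hE (N+1) (hbig _ (by omega))
  have E2 := hE (N+2) (hbig _ (by omega))
  have E0' : (Qq N : ℚ)*(a:ℚ) + (Pp N : ℚ)*(b:ℚ) + (Rr N : ℚ)*(c:ℚ) = 0 := by
    have : ((a * Qq N + b * Pp N + c * Rr N : ℤ) : ℚ) = 0 := by rw [E0]; norm_num
    push_cast at this
    linarith
  have E1' : (Qq (N+1) : ℚ)*(a:ℚ) + (Pp (N+1) : ℚ)*(b:ℚ) + (Rr (N+1) : ℚ)*(c:ℚ) = 0 := by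
    have : ((a * Qq (N+1) + b * Pp (N+1) + c * Rr (N+1) : ℤ) : ℚ) = 0 := by rw [E1]; norm_num
    push_cast at this
    linarith
  have E2' : (Qq (N+2) : ℚ)*(a:ℚ) + (Pp (N+2) : ℚ)*(b:ℚ) + (Rr (N+2) : ℚ)*(c:ℚ) = 0 := by
    have : ((a * Qq (N+2) + b * Pp (N+2) + c * Rr (N+2) : ℤ) : ℚ) = 0 := by rw [E2]; norm_num
    push_cast at this
    linarith
  set M : Matrix (Fin 3) (Fin 3) ℚ :=
    !![(Qq N : ℚ), (Pp N : ℚ), (Rr N : ℚ);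
       (Qq (N+1) : ℚ), (Pp (N+1) : ℚ), (Rr (N+1) : ℚ);
       (Qq (N+2) : ℚ), (Pp (N+2) : ℚ), (Rr (N+2) : ℚ)] with hM
  have hdet : M.det = ((dd N : ℤ) : ℚ) := by
    rw [Matrix.det_fin_three]
    simp [hM]
    unfold dd
    push_cast
    ring
  have hdet0 : M.det ≠ 0 := by
    rw [hdet]
    exact_mod_cast dd_ne_zero N
  have hmv : M.mulVec ![(a:ℚ), (b:ℚ), (c:ℚ)] = 0 := by
    funext i
    fin_cases i <;>
      · simp [hM, Matrix.mulVec, dotProduct, Fin.sum_univ_three]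
        linarith [E0', E1', E2']
  have hv0 := Matrix.eq_zero_of_mulVec_eq_zero hdet0 hmv
  refine ⟨?_, ?_, ?_⟩
  · have := congrFun hv0 0
    simp at this
    exact_mod_cast this
  · have := congrFun hv0 1
    simp at this
    exact_mod_cast this
  · have := congrFun hv0 2
    simp at this
    exact_mod_cast this

include herr h0 h1 in
lemma rat_nondeg (a b c : ℚ) (hrel : (a:ℝ) + (b:ℝ)*ξ + (c:ℝ)*ξ^2 = 0) :
    a = 0 ∧ b = 0 ∧ c = 0 := by
  have hnum : ∀ q : ℚ, ((q.num : ℝ)) = (q:ℝ) * (q.den : ℝ) := by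
    intro q
    have h := Rat.mul_den_eq_num q
    exact_mod_cast congrArg (fun y : ℚ => (y : ℝ)) h.symm
  have hA : ((a.num * (b.den:ℤ) * (c.den:ℤ) : ℤ) : ℝ)
      + ((b.num * (a.den:ℤ) * (c.den:ℤ) : ℤ) : ℝ) * ξ
      + ((c.num * (a.den:ℤ) * (b.den:ℤ) : ℤ) : ℝ) * ξ^2 = 0 := by
    push_cast
    rw [hnum a, hnum b, hnum c]
    linear_combination ((a.den : ℝ) * (b.den : ℝ) * (c.den : ℝ)) * hrel
  obtain ⟨hA0, hB0, hC0⟩ := int_nondeg herr h0 h1 _ _ _ hA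
  have hbd : (b.den : ℤ) ≠ 0 := by exact_mod_cast b.den_nz
  have hcd : (c.den : ℤ) ≠ 0 := by exact_mod_cast c.den_nz
  have had : (a.den : ℤ) ≠ 0 := by exact_mod_cast a.den_nz
  refine ⟨?_, ?_, ?_⟩
  · have : a.num = 0 := by
      rcases mul_eq_zero.mp hA0 with h | h
      · rcases mul_eq_zero.mp h with h' | h'
        · exact h'
        · exact absurd h' hbd
      · exact absurd h hcd
    exact Rat.zero_of_num_zero this
  · have : b.num = 0 := by
      rcases mul_eq_zero.mp hB0 with h | h
      · rcases mul_eq_zero.mp h with h' | h'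
        · exact h'
        · exact absurd h' had
      · exact absurd h hcd
    exact Rat.zero_of_num_zero this
  · have : c.num = 0 := by
      rcases mul_eq_zero.mp hC0 with h | h
      · rcases mul_eq_zero.mp h with h' | h'
        · exact h'
        · exact absurd h' had
      · exact absurd h hbd
    exact Rat.zero_of_num_zero this

end Nondeg

open Polynomial in
lemma I_isIntegral : IsIntegral ℚ Complex.I := by
  refine ⟨X^2 + C 1, monic_X_pow_add_C 1 (by norm_num), ?_⟩
  simp [Complex.I_sq]

lemma QI_mem (z : ℂ) (hz : z ∈ ℚ⟮Complex.I⟯) : ∃ a b : ℚ, z = (a:ℂ) + (b:ℂ) * Complex.I := by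
  have h2 : z ∈ Algebra.adjoin ℚ {Complex.I} := by
    rw [← IntermediateField.adjoin_simple_toSubalgebra_of_isAlgebraic I_isIntegral.isAlgebraic]
    exact hz
  refine Algebra.adjoin_induction (p := fun x _ => ∃ a b : ℚ, x = (a:ℂ) + (b:ℂ) * Complex.I)
    ?_ ?_ ?_ ?_ h2
  · intro x hx
    rw [Set.mem_singleton_iff] at hx
    exact ⟨0, 1, by rw [hx]; simp⟩
  · intro r
    exact ⟨r, 0, by rw [eq_ratCast (algebraMap ℚ ℂ) r]; simp⟩
  · rintro x y hx hy ⟨a1, b1, e1⟩ ⟨a2, b2, e2⟩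
    exact ⟨a1 + a2, b1 + b2, by rw [e1, e2]; push_cast; ring⟩
  · rintro x y hx hy ⟨a1, b1, e1⟩ ⟨a2, b2, e2⟩
    refine ⟨a1*a2 - b1*b2, a1*b2 + b1*a2, ?_⟩
    rw [e1, e2]
    push_cast
    linear_combination ((b1:ℂ) * (b2:ℂ)) * Complex.I_sq

theorem extremal_gaussianInt_aux :
    ∃ ξ : ℂ,
      LinearIndependent ℚ⟮Complex.I⟯ ![(1 : ℂ), ξ, ξ ^ 2] ∧
      ∃ c : ℝ, 0 < c ∧ ∃ X₀ : ℝ, ∀ X : ℝ, X₀ ≤ X →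
        ∃ x : Fin 3 → GaussianInt, x ≠ 0 ∧
          ‖GaussianInt.toComplex (x 0)‖ ≤ X ∧
          max (‖GaussianInt.toComplex (x 0) * ξ - GaussianInt.toComplex (x 1)‖)
              (‖GaussianInt.toComplex (x 0) * ξ ^ 2 - GaussianInt.toComplex (x 2)‖)
            ≤ c * X ^ (-1 / Real.goldenRatio) := by
  obtain ⟨ξ, herr, h0, h1⟩ := exists_xi
  refine ⟨(ξ:ℂ), ?_, 720, by norm_num, 1, ?_⟩
  · rw [Fintype.linearIndependent_iff]
    intro g hg
    have hsum : (↑(g 0) : ℂ) * 1 + (↑(g 1) : ℂ) * (ξ:ℂ) + (↑(g 2) : ℂ) * (ξ:ℂ)^2 = 0 := by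
      have h := hg
      rw [Fin.sum_univ_three] at h
      simpa [Algebra.smul_def] using h
    obtain ⟨a0, b0, e0⟩ := QI_mem _ (g 0).2
    obtain ⟨a1, b1, e1⟩ := QI_mem _ (g 1).2
    obtain ⟨a2, b2, e2⟩ := QI_mem _ (g 2).2
    rw [e0, e1, e2] at hsum
    have hform : (((a0:ℝ) + (a1:ℝ)*ξ + (a2:ℝ)*ξ^2 : ℝ) : ℂ)
        + (((b0:ℝ) + (b1:ℝ)*ξ + (b2:ℝ)*ξ^2 : ℝ) : ℂ) * Complex.I = 0 := by
      rw [← hsum]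
      push_cast
      ring
    have key1 : (a0:ℝ) + (a1:ℝ)*ξ + (a2:ℝ)*ξ^2 = 0 := by
      have := congrArg Complex.re hform
      simpa [← Complex.ofReal_pow] using this
    have key2 : (b0:ℝ) + (b1:ℝ)*ξ + (b2:ℝ)*ξ^2 = 0 := by
      have := congrArg Complex.im hform
      simpa [← Complex.ofReal_pow] using this
    obtain ⟨ha0, ha1, ha2⟩ := rat_nondeg herr h0 h1 a0 a1 a2 key1
    obtain ⟨hb0, hb1, hb2⟩ := rat_nondeg herr h0 h1 b0 b1 b2 key2
    have hg0 : g 0 = 0 := (ZeroMemClass.coe_eq_zero).mp (by rw [e0, ha0, hb0]; simp)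
    have hg1 : g 1 = 0 := (ZeroMemClass.coe_eq_zero).mp (by rw [e1, ha1, hb1]; simp)
    have hg2 : g 2 = 0 := (ZeroMemClass.coe_eq_zero).mp (by rw [e2, ha2, hb2]; simp)
    intro i
    fin_cases i
    exacts [hg0, hg1, hg2]
  · intro X hX
    obtain ⟨j, hQX, hXQ⟩ := exists_index X hX
    have hQp := QqR_pos j
    refine ⟨![((Qq j : ℤ) : GaussianInt), ((Pp j : ℤ) : GaussianInt), ((Rr j : ℤ) : GaussianInt)],
      ?_, ?_, ?_⟩
    · intro hx
      have h := congrFun hx 0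
      simp only [Matrix.cons_val_zero, Pi.zero_apply] at h
      have hre : ((Qq j : ℤ) : GaussianInt).re = 0 := by rw [h]; rfl
      rw [Zsqrtd.re_intCast] at hre
      have := Qq_one_le j
      omega
    · have he : GaussianInt.toComplex ((Qq j : ℤ) : GaussianInt) = ((Qq j : ℤ) : ℂ) :=
        map_intCast _ _
      simp only [Matrix.cons_val_zero, he]
      rw [Complex.norm_intCast]
      rw [_root_.abs_of_pos (by exact_mod_cast hQp : (0:ℝ) < ((Qq j : ℤ) : ℝ))]
      exact_mod_cast hQX
    · have hrate := rate j X hX hXQ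
      have t0 : GaussianInt.toComplex (![((Qq j : ℤ) : GaussianInt), ((Pp j : ℤ) : GaussianInt),
          ((Rr j : ℤ) : GaussianInt)] 0) = ((Qq j : ℤ) : ℂ) := map_intCast _ _
      have t1 : GaussianInt.toComplex (![((Qq j : ℤ) : GaussianInt), ((Pp j : ℤ) : GaussianInt),
          ((Rr j : ℤ) : GaussianInt)] 1) = ((Pp j : ℤ) : ℂ) := map_intCast _ _
      have t2 : GaussianInt.toComplex (![((Qq j : ℤ) : GaussianInt), ((Pp j : ℤ) : GaussianInt),
          ((Rr j : ℤ) : GaussianInt)] 2) = ((Rr j : ℤ) : ℂ) := map_intCast _ _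
      have h25 : (2:ℝ) / (Qq j : ℝ) ≤ 5 / (Qq j : ℝ) := by
        rw [div_le_div_iff_of_pos_right hQp]; norm_num
      apply max_le
      · have d1 : ((Qq j : ℤ) : ℂ) * (ξ:ℂ) - ((Pp j : ℤ) : ℂ)
            = (((Qq j:ℝ) * ξ - (Pp j:ℝ) : ℝ) : ℂ) := by push_cast; ring
        rw [t0, t1, d1, Complex.norm_real, Real.norm_eq_abs]
        calc |(Qq j:ℝ) * ξ - (Pp j:ℝ)| ≤ 2 / (Qq j : ℝ) := err1 herr j
          _ ≤ 5 / (Qq j : ℝ) := h25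
          _ ≤ 720 * X ^ (-1 / Real.goldenRatio) := hrate
      · have d2 : ((Qq j : ℤ) : ℂ) * (ξ:ℂ)^2 - ((Rr j : ℤ) : ℂ)
            = (((Qq j:ℝ) * ξ^2 - (Rr j:ℝ) : ℝ) : ℂ) := by push_cast; ring
        rw [t0, t2, d2, Complex.norm_real, Real.norm_eq_abs]
        calc |(Qq j:ℝ) * ξ^2 - (Rr j:ℝ)| ≤ 5 / (Qq j : ℝ) := err2 herr h0 h1 j
          _ ≤ 720 * X ^ (-1 / Real.goldenRatio) := hrate

/-- **Extremal complex numbers over the Gaussian integers.** There exist `ξ ∈ ℂ` with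
`1, ξ, ξ²` linearly independent over `ℚ(i)`, and a constant `c > 0` such that, for
every sufficiently large real `X`, there is a nonzero triple of Gaussian integers
`(x₀, x₁, x₂) ∈ ℤ[i]³` with `|x₀| ≤ X` and
`max (|x₀ξ - x₁|, |x₀ξ² - x₂|) ≤ c X^(-1/γ)`. -/
theorem extremal_gaussianInt :
    ∃ ξ : ℂ,
      LinearIndependent ℚ⟮Complex.I⟯ ![(1 : ℂ), ξ, ξ ^ 2] ∧
      ∃ c : ℝ, 0 < c ∧ ∃ X₀ : ℝ, ∀ X : ℝ, X₀ ≤ X →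
        ∃ x : Fin 3 → GaussianInt, x ≠ 0 ∧
          ‖GaussianInt.toComplex (x 0)‖ ≤ X ∧
          max (‖GaussianInt.toComplex (x 0) * ξ - GaussianInt.toComplex (x 1)‖)
              (‖GaussianInt.toComplex (x 0) * ξ ^ 2 - GaussianInt.toComplex (x 2)‖)
            ≤ c * X ^ (-1 / Real.goldenRatio) := by
  exact extremal_gaussianInt_aux
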